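/- For every bicomplex number ω with j-decomposition ω = a + i b (a, b ∈ 𝔻), the modulus satisfies |ω|_j = sup{ a cos θ + b sin θ : θ ∈ [0, 2π] }, where the supremum is taken in the Dedekind complete Riesz space 𝔻. -/

import Mathlib

lemma bicomplex_comp_le (z : ℂ) (θ : ℝ) :
    z.re * Real.cos θ + z.im * Real.sin θ ≤ ‖z‖ := by
  have h1 : Real.sin θ ^ 2 + Real.cos θ ^ 2 = 1 := Real.sin_sq_add_cos_sq θ
  have h2 : (‖z‖) ^ 2 = z.re ^ 2 + z.im ^ 2 := by
    rw [Complex.sq_norm, Complex.normSq_apply]; ring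
  have h3 : 0 ≤ ‖z‖ := norm_nonneg z
  nlinarith [sq_nonneg (z.re * Real.sin θ - z.im * Real.cos θ),
    sq_nonneg (z.re * Real.cos θ + z.im * Real.sin θ - ‖z‖)]

lemma bicomplex_exists_theta (z : ℂ) : ∃ θ ∈ Set.Icc (0 : ℝ) (2 * Real.pi),
    z.re * Real.cos θ + z.im * Real.sin θ = ‖z‖ := by
  by_cases hz : z = 0
  · exact ⟨0, ⟨le_refl 0, by positivity⟩, by simp [hz]⟩
  · set φ := Complex.arg z with hφ
    have hφ1 : -Real.pi < φ := Complex.neg_pi_lt_arg z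
    have hφ2 : φ ≤ Real.pi := Complex.arg_le_pi z
    have hcos : Real.cos φ = z.re / ‖z‖ := Complex.cos_arg hz
    have hsin : Real.sin φ = z.im / ‖z‖ := Complex.sin_arg z
    have habs : ‖z‖ ≠ 0 := by simpa using hz
    have h2 : (‖z‖) ^ 2 = z.re ^ 2 + z.im ^ 2 := by
      rw [Complex.sq_norm, Complex.normSq_apply]; ring
    have key : z.re * Real.cos φ + z.im * Real.sin φ = ‖z‖ := by
      rw [hcos, hsin]
      field_simp
      nlinarith [h2]
    have hpi := Real.pi_pos
    by_cases h0 : 0 ≤ φ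
    · exact ⟨φ, ⟨h0, by linarith⟩, key⟩
    · refine ⟨φ + 2 * Real.pi, ⟨by linarith, by linarith⟩, ?_⟩
      rw [Real.cos_add_two_pi, Real.sin_add_two_pi]
      exact key

/-- For a bicomplex number ω = a + ib (a, b ∈ 𝔻), the hyperbolic modulus
`|ω|_j` is the supremum of `{a cos θ + b sin θ : θ ∈ [0, 2π]}` in the
Dedekind complete Riesz space 𝔻 ≅ ℝ × ℝ. -/
theorem bicomplex_modulus_sup (ω : ℂ × ℂ) :
    IsLUB
      {z : ℝ × ℝ | ∃ θ ∈ Set.Icc (0 : ℝ) (2 * Real.pi),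
        z = (ω.1.re * Real.cos θ + ω.1.im * Real.sin θ,
             ω.2.re * Real.cos θ + ω.2.im * Real.sin θ)}
      (‖ω.1‖, ‖ω.2‖) := by
  constructor
  · rintro z ⟨θ, hθ, rfl⟩
    exact ⟨bicomplex_comp_le ω.1 θ, bicomplex_comp_le ω.2 θ⟩
  · rintro ⟨u1, u2⟩ hu
    obtain ⟨θ1, hθ1, h1⟩ := bicomplex_exists_theta ω.1
    obtain ⟨θ2, hθ2, h2⟩ := bicomplex_exists_theta ω.2
    have hu1 := hu ⟨θ1, hθ1, rfl⟩
    have hu2 := hu ⟨θ2, hθ2, rfl⟩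
    exact ⟨h1 ▸ hu1.1, h2 ▸ hu2.2⟩
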